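/- Let m and n be integers greater than 1 with gcd(m,n) = 2. Then τ(T_{m×n}) = 4; that is, the maximum size of a subset of T_{m×n} with no three points on a common line is exactly 4. -/

import Mathlib

/-- Projection `π_{m,n} : ℤ×ℤ → (ℤ/mℤ)×(ℤ/nℤ)`. -/
def torusProj (m n : ℕ) (P : ℤ × ℤ) : ZMod m × ZMod n :=
  ((P.1 : ZMod m), (P.2 : ZMod n))

/-- `L` is a line on the discrete torus `T_{m×n}`: the image under `π_{m,n}`
of `{(a+uk, b+vk) : k ∈ ℤ}` with `gcd(u,v)=1`. -/
def IsTorusLine (m n : ℕ) (L : Set (ZMod m × ZMod n)) : Prop :=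
  ∃ a b u v : ℤ, Int.gcd u v = 1 ∧
    L = torusProj m n '' {P : ℤ × ℤ | ∃ k : ℤ, P = (a + u * k, b + v * k)}

/-- `X` satisfies the no-three-in-line condition on `T_{m×n}`:
no three distinct points of `X` lie on a common line. -/
def NoThreeInLine (m n : ℕ) (X : Set (ZMod m × ZMod n)) : Prop :=
  ∀ L : Set (ZMod m × ZMod n), IsTorusLine m n L →
    ∀ A ∈ X, ∀ B ∈ X, ∀ C ∈ X,
      A ∈ L → B ∈ L → C ∈ L → A = B ∨ A = C ∨ B = C

/-- `τ(T_{m×n})`: the maximum cardinality of a subset of `T_{m×n}`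
satisfying the no-three-in-line condition. -/
noncomputable def tau (m n : ℕ) : ℕ :=
  sSup {k : ℕ | ∃ X : Set (ZMod m × ZMod n), NoThreeInLine m n X ∧ X.ncard = k}

/-- The reduction map `ρ : T_{m×n} → T_{p×p}` (for `p ∣ m`, `p ∣ n`). -/
def torusRed (m n p : ℕ) (hm : p ∣ m) (hn : p ∣ n)
    (q : ZMod m × ZMod n) : ZMod p × ZMod p :=
  (ZMod.castHom hm (ZMod p) q.1, ZMod.castHom hn (ZMod p) q.2)

/-- The determinant `D(A,B,C)` with rows `(1,1,1)`, x-coords, y-coords. -/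
def detD (A B C : ℤ × ℤ) : ℤ :=
  Matrix.det !![1, 1, 1; A.1, B.1, C.1; A.2, B.2, C.2]


/-- CRT for integers with coprime moduli, phrased with dvd. -/
lemma crtInt (M N x y : ℤ) (h : IsCoprime M N) : ∃ e : ℤ, M ∣ e - x ∧ N ∣ e - y := by
  obtain ⟨a, b, hab⟩ := h
  refine ⟨y * (a * M) + x * (b * N), ⟨a * (y - x), ?_⟩, ⟨b * (x - y), ?_⟩⟩ <;>
    first
    | linear_combination x * hab
    | linear_combination y * hab

/-- Parallel integer vectors share a primitive direction. -/
lemma exists_primitive (X Y P Q : ℤ) (h : X * Q = Y * P) :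
    ∃ u v s t : ℤ, Int.gcd u v = 1 ∧ u * s = X ∧ v * s = Y ∧ u * t = P ∧ v * t = Q := by
  by_cases hXY : X = 0 ∧ Y = 0
  · obtain ⟨hX, hY⟩ := hXY
    by_cases hPQ : P = 0 ∧ Q = 0
    · exact ⟨1, 0, 0, 0, by simp, by simp [hX], by simp [hY], by simp [hPQ.1], by simp [hPQ.2]⟩
    · have hg : Int.gcd P Q ≠ 0 := by
        simp only [Ne, Int.gcd_eq_zero_iff]; tauto
      have hg' : (Int.gcd P Q : ℤ) ≠ 0 := by exact_mod_cast hg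
      have hdP : (Int.gcd P Q : ℤ) ∣ P := Int.gcd_dvd_left P Q
      have hdQ : (Int.gcd P Q : ℤ) ∣ Q := Int.gcd_dvd_right P Q
      exact ⟨P / Int.gcd P Q, Q / Int.gcd P Q, 0, Int.gcd P Q,
        Int.gcd_div_gcd_div_gcd (by positivity), by simp [hX], by simp [hY],
        Int.ediv_mul_cancel hdP, Int.ediv_mul_cancel hdQ⟩
  · have hg : Int.gcd X Y ≠ 0 := by
      simp only [Ne, Int.gcd_eq_zero_iff]; tauto
    have hg' : (Int.gcd X Y : ℤ) ≠ 0 := by exact_mod_cast hg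
    have hdX : (Int.gcd X Y : ℤ) ∣ X := Int.gcd_dvd_left X Y
    have hdY : (Int.gcd X Y : ℤ) ∣ Y := Int.gcd_dvd_right X Y
    set g : ℤ := (Int.gcd X Y : ℤ)
    set u := X / g with hu
    set v := Y / g with hv
    have huX : u * g = X := Int.ediv_mul_cancel hdX
    have hvY : v * g = Y := Int.ediv_mul_cancel hdY
    have hcop : Int.gcd u v = 1 := Int.gcd_div_gcd_div_gcd (by positivity)
    have key : u * Q = v * P := by
      have h2 : g * (u * Q) = g * (v * P) := by
        calc g * (u * Q) = X * Q := by rw [← huX]; ring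
        _ = Y * P := h
        _ = g * (v * P) := by rw [← hvY]; ring
      exact mul_left_cancel₀ hg' h2
    by_cases hu0 : u = 0
    · have hv1 : v = 1 ∨ v = -1 := by
        have h3 := hcop; rw [hu0] at h3; simp [Int.gcd] at h3; omega
      have hP0 : P = 0 := by
        rw [hu0] at key; simp at key
        rcases hv1 with h4 | h4 <;> rw [h4] at key <;> omega
      refine ⟨u, v, g, v * Q, hcop, huX, hvY, by simp [hu0, hP0], ?_⟩
      have : v * v = 1 := by rcases hv1 with h4 | h4 <;> rw [h4] <;> ring
      calc v * (v * Q) = (v * v) * Q := by ring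
      _ = Q := by rw [this]; ring
    · have hcop' : IsCoprime u v := Int.isCoprime_iff_gcd_eq_one.mpr hcop
      have hudvd : u ∣ P := by
        have h1 : u ∣ v * P := ⟨Q, by linear_combination -key⟩
        exact hcop'.dvd_of_dvd_mul_left h1
      obtain ⟨t, ht⟩ := hudvd
      refine ⟨u, v, g, t, hcop, huX, hvY, ht.symm, ?_⟩
      have h5 : u * (v * t) = u * Q := by rw [key, ht]; ring
      exact mul_left_cancel₀ hu0 h5

/-- Construction 1: n' odd, q even. -/
lemma construct1 (m' n' x y p q : ℤ) (hodd : Odd n') (hcop : IsCoprime m' n') (hq : 2 ∣ q) :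
    ∃ α β γ δ : ℤ, α * δ = β * γ ∧ m' ∣ α - x ∧ n' ∣ β - y ∧
      2 * m' ∣ γ - p ∧ 2 * n' ∣ δ - q := by
  obtain ⟨t, ht⟩ := hodd
  have hcop2 : IsCoprime (2 : ℤ) n' := ⟨-t, 1, by omega⟩
  have hcopm : IsCoprime (2 * m') n' := hcop2.mul_left hcop
  obtain ⟨e, hex, hey⟩ := crtInt m' n' x y hcop
  obtain ⟨f, hfp, hfq⟩ := crtInt (2 * m') n' p q hcopm
  refine ⟨e, e * (1 + n'), f, (1 + n') * f, by ring, hex, ?_, hfp, ?_⟩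
  · obtain ⟨c, hc⟩ := hey
    exact ⟨c + e, by linarith [hc]⟩
  · have h2 : (2:ℤ) ∣ (1 + n') * f - q := by
      obtain ⟨q0, hq0⟩ := hq
      exact ⟨(t + 1) * f - q0, by rw [ht, hq0]; ring⟩
    have hn' : n' ∣ (1 + n') * f - q := by
      obtain ⟨c, hc⟩ := hfq
      exact ⟨c + f, by linarith [hc]⟩
    exact hcop2.mul_dvd h2 hn'

/-- Construction 2: m' odd, p even (mirror of construct1). -/
lemma construct2 (m' n' x y p q : ℤ) (hodd : Odd m') (hcop : IsCoprime m' n') (hp : 2 ∣ p) :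
    ∃ α β γ δ : ℤ, α * δ = β * γ ∧ m' ∣ α - x ∧ n' ∣ β - y ∧
      2 * m' ∣ γ - p ∧ 2 * n' ∣ δ - q := by
  obtain ⟨α, β, γ, δ, heq, h1, h2, h3, h4⟩ :=
    construct1 n' m' y x q p hodd hcop.symm hp
  exact ⟨β, α, δ, γ, by linarith [heq], h2, h1, h4, h3⟩

/-- Construction 3: p ≡ q (mod 2). -/
lemma construct3 (m' n' x y p q : ℤ) (hcop : IsCoprime m' n') (hpq : 2 ∣ q - p) :
    ∃ α β γ δ : ℤ, α * δ = β * γ ∧ m' ∣ α - x ∧ n' ∣ β - y ∧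
      2 * m' ∣ γ - p ∧ 2 * n' ∣ δ - q := by
  obtain ⟨e, hex, hey⟩ := crtInt m' n' x y hcop
  obtain ⟨a, b, hab⟩ := hcop
  obtain ⟨w, hw⟩ := hpq
  refine ⟨e, e, p + 2 * m' * (a * w), p + 2 * m' * (a * w), rfl, hex, hey,
    ⟨a * w, by ring⟩, ⟨-(w * b), ?_⟩⟩
  linear_combination 2 * w * hab - hw

/-- A line through three points given integer witnesses with parallel offsets. -/
lemma line_of_witness (m n : ℕ) (a b X Y P Q : ℤ) (h : X * Q = Y * P) :
    ∃ L, IsTorusLine m n L ∧ torusProj m n (a, b) ∈ L ∧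
      torusProj m n (a + X, b + Y) ∈ L ∧ torusProj m n (a + P, b + Q) ∈ L := by
  obtain ⟨u, v, s, t, hcop, husX, hvsY, hutP, hvtQ⟩ := exists_primitive X Y P Q h
  refine ⟨torusProj m n '' {R : ℤ × ℤ | ∃ k : ℤ, R = (a + u * k, b + v * k)},
    ⟨a, b, u, v, hcop, rfl⟩, ⟨(a, b), ⟨0, by simp⟩, rfl⟩,
    ⟨(a + X, b + Y), ⟨s, by rw [← husX, ← hvsY]⟩, rfl⟩,
    ⟨(a + P, b + Q), ⟨t, by rw [← hutP, ← hvtQ]⟩, rfl⟩⟩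

/-- Main collinearity lemma: from congruence witnesses to a common line. -/
lemma collinear_main (m n m' n' : ℕ) [NeZero m] [NeZero n] (hm : m = 2 * m') (hn : n = 2 * n')
    (A B C : ZMod m × ZMod n) (x y p q : ℤ)
    (hx : ((2 * x : ℤ) : ZMod m) = B.1 - A.1) (hy : ((2 * y : ℤ) : ZMod n) = B.2 - A.2)
    (hp : ((p : ℤ) : ZMod m) = C.1 - A.1) (hq : ((q : ℤ) : ZMod n) = C.2 - A.2)
    (hw : ∃ α β γ δ : ℤ, α * δ = β * γ ∧ (m' : ℤ) ∣ α - x ∧ (n' : ℤ) ∣ β - y ∧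
      (2 * m' : ℤ) ∣ γ - p ∧ (2 * n' : ℤ) ∣ δ - q) :
    ∃ L, IsTorusLine m n L ∧ A ∈ L ∧ B ∈ L ∧ C ∈ L := by
  obtain ⟨α, β, γ, δ, heq, hα, hβ, hγ, hδ⟩ := hw
  set a : ℤ := (A.1.val : ℤ) with ha
  set b : ℤ := (A.2.val : ℤ) with hb
  have hA1 : ((a : ℤ) : ZMod m) = A.1 := by
    rw [ha]; push_cast; exact ZMod.natCast_rightInverse A.1
  have hA2 : ((b : ℤ) : ZMod n) = A.2 := by
    rw [hb]; push_cast; exact ZMod.natCast_rightInverse A.2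
  obtain ⟨L, hL, h1, h2, h3⟩ := line_of_witness m n a b (2 * α) (2 * β) γ δ
    (by linear_combination 2 * heq)
  have cast_eq : ∀ (M : ℕ) (u w : ℤ), (M : ℤ) ∣ u - w → ((u : ℤ) : ZMod M) = w := by
    intro M u w hd
    rw [ZMod.intCast_eq_intCast_iff]
    exact (Int.modEq_iff_dvd.mpr hd).symm
  have hXm : ((2 * α : ℤ) : ZMod m) = ((2 * x : ℤ) : ZMod m) := by
    refine cast_eq m (2 * α) (2 * x) ?_
    obtain ⟨c, hc⟩ := hα
    exact ⟨c, by rw [hm]; push_cast; linarith⟩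
  have hYn : ((2 * β : ℤ) : ZMod n) = ((2 * y : ℤ) : ZMod n) := by
    refine cast_eq n (2 * β) (2 * y) ?_
    obtain ⟨c, hc⟩ := hβ
    exact ⟨c, by rw [hn]; push_cast; linarith⟩
  have hPm : ((γ : ℤ) : ZMod m) = ((p : ℤ) : ZMod m) := by
    refine cast_eq m γ p ?_; rw [hm]; exact_mod_cast hγ
  have hQn : ((δ : ℤ) : ZMod n) = ((q : ℤ) : ZMod n) := by
    refine cast_eq n δ q ?_; rw [hn]; exact_mod_cast hδ
  have hAeq : A = torusProj m n (a, b) :=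
    Prod.ext hA1.symm hA2.symm
  have hBeq : B = torusProj m n (a + 2 * α, b + 2 * β) := by
    refine Prod.ext ?_ ?_
    · show B.1 = ((a + 2 * α : ℤ) : ZMod m)
      calc B.1 = A.1 + (B.1 - A.1) := by ring
      _ = ((a : ℤ) : ZMod m) + ((2 * x : ℤ) : ZMod m) := by rw [hA1, hx]
      _ = ((a + 2 * α : ℤ) : ZMod m) := by rw [← hXm]; push_cast; ring
    · show B.2 = ((b + 2 * β : ℤ) : ZMod n)
      calc B.2 = A.2 + (B.2 - A.2) := by ring
      _ = ((b : ℤ) : ZMod n) + ((2 * y : ℤ) : ZMod n) := by rw [hA2, hy]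
      _ = ((b + 2 * β : ℤ) : ZMod n) := by rw [← hYn]; push_cast; ring
  have hCeq : C = torusProj m n (a + γ, b + δ) := by
    refine Prod.ext ?_ ?_
    · show C.1 = ((a + γ : ℤ) : ZMod m)
      calc C.1 = A.1 + (C.1 - A.1) := by ring
      _ = ((a : ℤ) : ZMod m) + ((p : ℤ) : ZMod m) := by rw [hA1, hp]
      _ = ((a + γ : ℤ) : ZMod m) := by rw [← hPm]; push_cast; ring
    · show C.2 = ((b + δ : ℤ) : ZMod n)
      calc C.2 = A.2 + (C.2 - A.2) := by ring
      _ = ((b : ℤ) : ZMod n) + ((q : ℤ) : ZMod n) := by rw [hA2, hq]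
      _ = ((b + δ : ℤ) : ZMod n) := by rw [← hQn]; push_cast; ring
  exact ⟨L, hL, hAeq ▸ h1, hBeq ▸ h2, hCeq ▸ h3⟩

lemma int_cast_two_eq_one (z : ℤ) (hz : ¬ (2:ℤ) ∣ z) : ((z : ℤ) : ZMod 2) = 1 := by
  obtain ⟨k, hk⟩ : ∃ k : ℤ, z = 2 * k + 1 := ⟨z / 2, by omega⟩
  calc ((z : ℤ) : ZMod 2) = 2 * (k : ZMod 2) + 1 := by rw [hk]; push_cast; ring
  _ = 1 := by rw [show (2 : ZMod 2) = 0 by decide]; ring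

lemma collinear_of_red (m n : ℕ) [NeZero m] [NeZero n] (hm2 : 2 ∣ m) (hn2 : 2 ∣ n)
    (hcop : Nat.Coprime (m / 2) (n / 2))
    (A B C : ZMod m × ZMod n)
    (hAB : torusRed m n 2 hm2 hn2 A = torusRed m n 2 hm2 hn2 B)
    (hC : torusRed m n 2 hm2 hn2 C - torusRed m n 2 hm2 hn2 A ≠
      (if Odd (n / 2) then ((0, 1) : ZMod 2 × ZMod 2) else (1, 0))) :
    ∃ L, IsTorusLine m n L ∧ A ∈ L ∧ B ∈ L ∧ C ∈ L := by
  set m' := m / 2 with hm'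
  set n' := n / 2 with hn'
  have hm : m = 2 * m' := (Nat.mul_div_cancel' hm2).symm
  have hn : n = 2 * n' := (Nat.mul_div_cancel' hn2).symm
  -- cast helper: castHom value as int cast of val
  have red1 : ∀ D : ZMod m × ZMod n,
      (torusRed m n 2 hm2 hn2 D).1 = (((D.1.val : ℤ)) : ZMod 2) := by
    intro D
    show (ZMod.castHom hm2 (ZMod 2)) D.1 = _
    rw [ZMod.castHom_apply, ZMod.cast_eq_val]
    push_cast; ring
  have red2 : ∀ D : ZMod m × ZMod n,
      (torusRed m n 2 hm2 hn2 D).2 = (((D.2.val : ℤ)) : ZMod 2) := by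
    intro D
    show (ZMod.castHom hn2 (ZMod 2)) D.2 = _
    rw [ZMod.castHom_apply, ZMod.cast_eq_val]
    push_cast; ring
  set d1 : ℤ := (B.1.val : ℤ) - (A.1.val : ℤ) with hd1
  set d2 : ℤ := (B.2.val : ℤ) - (A.2.val : ℤ) with hd2
  set p : ℤ := (C.1.val : ℤ) - (A.1.val : ℤ) with hpd
  set q : ℤ := (C.2.val : ℤ) - (A.2.val : ℤ) with hqd
  have hval : ∀ (M : ℕ) [NeZero M] (u : ZMod M), (((u.val : ℤ)) : ZMod M) = u := by
    intro M _ u; push_cast; exact ZMod.natCast_rightInverse u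
  have hd1c : ((d1 : ℤ) : ZMod m) = B.1 - A.1 := by
    rw [hd1]; push_cast [ZMod.natCast_rightInverse A.1, ZMod.natCast_rightInverse B.1]; rfl
  have hd2c : ((d2 : ℤ) : ZMod n) = B.2 - A.2 := by
    rw [hd2]; push_cast [ZMod.natCast_rightInverse A.2, ZMod.natCast_rightInverse B.2]; rfl
  have hpc : ((p : ℤ) : ZMod m) = C.1 - A.1 := by
    rw [hpd]; push_cast [ZMod.natCast_rightInverse A.1, ZMod.natCast_rightInverse C.1]; rfl
  have hqc : ((q : ℤ) : ZMod n) = C.2 - A.2 := by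
    rw [hqd]; push_cast [ZMod.natCast_rightInverse A.2, ZMod.natCast_rightInverse C.2]; rfl
  -- parity of d1, d2
  have hd1e : (2 : ℤ) ∣ d1 := by
    have h0 : ((d1 : ℤ) : ZMod 2) = 0 := by
      have h1 := congrArg Prod.fst hAB
      rw [red1 A, red1 B] at h1
      push_cast at h1
      rw [hd1]; push_cast
      rw [← h1]; ring
    exact_mod_cast (ZMod.intCast_zmod_eq_zero_iff_dvd d1 2).mp h0
  have hd2e : (2 : ℤ) ∣ d2 := by
    have h0 : ((d2 : ℤ) : ZMod 2) = 0 := by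
      have h1 := congrArg Prod.snd hAB
      rw [red2 A, red2 B] at h1
      push_cast at h1
      rw [hd2]; push_cast
      rw [← h1]; ring
    exact_mod_cast (ZMod.intCast_zmod_eq_zero_iff_dvd d2 2).mp h0
  obtain ⟨x, hx⟩ := hd1e
  obtain ⟨y, hy⟩ := hd2e
  have hxc : ((2 * x : ℤ) : ZMod m) = B.1 - A.1 := by rw [← hx]; exact hd1c
  have hyc : ((2 * y : ℤ) : ZMod n) = B.2 - A.2 := by rw [← hy]; exact hd2c
  -- parities of p and q as ZMod 2 elements
  have hpc2 : ((p : ℤ) : ZMod 2) = (torusRed m n 2 hm2 hn2 C).1 - (torusRed m n 2 hm2 hn2 A).1 := by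
    rw [red1 A, red1 C, hpd]; push_cast; ring
  have hqc2 : ((q : ℤ) : ZMod 2) = (torusRed m n 2 hm2 hn2 C).2 - (torusRed m n 2 hm2 hn2 A).2 := by
    rw [red2 A, red2 C, hqd]; push_cast; ring
  have hicop : IsCoprime (m' : ℤ) (n' : ℤ) := Nat.isCoprime_iff_coprime.mpr hcop
  refine collinear_main m n m' n' hm hn A B C x y p q hxc hyc hpc hqc ?_
  by_cases hodd : Odd n'
  · -- bad class is (0,1)
    simp only [if_pos hodd] at hC
    by_cases hq2 : (2 : ℤ) ∣ q
    · exact construct1 m' n' x y p q (by exact_mod_cast hodd) hicop hq2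
    · have hq1 : ((q : ℤ) : ZMod 2) = 1 := int_cast_two_eq_one q hq2
      have hp2 : ¬ (2 : ℤ) ∣ p := by
        intro hp2
        apply hC
        have hp0 : ((p : ℤ) : ZMod 2) = 0 := (ZMod.intCast_zmod_eq_zero_iff_dvd p 2).mpr hp2
        refine Prod.ext ?_ ?_
        · show (torusRed m n 2 hm2 hn2 C).1 - (torusRed m n 2 hm2 hn2 A).1 = 0
          rw [← hpc2, hp0]
        · show (torusRed m n 2 hm2 hn2 C).2 - (torusRed m n 2 hm2 hn2 A).2 = 1
          rw [← hqc2, hq1]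
      exact construct3 m' n' x y p q hicop (by omega)
  · -- n' even hence m' odd; bad class is (1,0)
    have hmodd : Odd m' := by
      rcases Nat.even_or_odd m' with he | ho
      · exfalso
        obtain ⟨r, hr⟩ := Nat.not_odd_iff_even.mp hodd
        obtain ⟨t, htt⟩ := he
        have h2n : 2 ∣ n' := ⟨r, by omega⟩
        have h2m : 2 ∣ m' := ⟨t, by omega⟩
        have := Nat.dvd_gcd h2m h2n
        rw [hcop] at this
        omega
      · exact ho
    simp only [if_neg hodd] at hC
    by_cases hp2 : (2 : ℤ) ∣ p
    · exact construct2 m' n' x y p q (by exact_mod_cast hmodd) hicop hp2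
    · have hp1 : ((p : ℤ) : ZMod 2) = 1 := int_cast_two_eq_one p hp2
      have hq2 : ¬ (2 : ℤ) ∣ q := by
        intro hq2'
        apply hC
        have hq0 : ((q : ℤ) : ZMod 2) = 0 := (ZMod.intCast_zmod_eq_zero_iff_dvd q 2).mpr hq2'
        refine Prod.ext ?_ ?_
        · show (torusRed m n 2 hm2 hn2 C).1 - (torusRed m n 2 hm2 hn2 A).1 = 1
          rw [← hpc2, hp1]
        · show (torusRed m n 2 hm2 hn2 C).2 - (torusRed m n 2 hm2 hn2 A).2 = 0
          rw [← hqc2, hq0]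
      exact construct3 m' n' x y p q hicop (by omega)

lemma ncard_le_four (m n : ℕ) (hm1 : 1 < m) (hn1 : 1 < n) (hg : Nat.gcd m n = 2)
    (X : Set (ZMod m × ZMod n)) (hX : NoThreeInLine m n X) : X.ncard ≤ 4 := by
  haveI : NeZero m := ⟨by omega⟩
  haveI : NeZero n := ⟨by omega⟩
  have hm2 : 2 ∣ m := hg ▸ Nat.gcd_dvd_left m n
  have hn2 : 2 ∣ n := hg ▸ Nat.gcd_dvd_right m n
  have hcop : Nat.Coprime (m / 2) (n / 2) := by
    have h := Nat.coprime_div_gcd_div_gcd (m := m) (n := n) (by omega)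
    rwa [hg] at h
  set ρ := torusRed m n 2 hm2 hn2 with hρ
  by_contra hcon
  push_neg at hcon
  have h5 : 5 ≤ X.ncard := hcon
  have hfin : X.Finite := X.toFinite
  set F := hfin.toFinset with hF
  have hFcard : 5 ≤ F.card := by
    rwa [Set.ncard_eq_toFinset_card X hfin] at h5
  set bad : ZMod 2 × ZMod 2 := if Odd (n / 2) then (0, 1) else (1, 0) with hbaddef
  have hbad0 : bad ≠ 0 := by
    rw [hbaddef]; split <;> decide
  -- find the good triple
  have claim : ∃ A B C : ZMod m × ZMod n, A ∈ X ∧ B ∈ X ∧ C ∈ X ∧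
      A ≠ B ∧ A ≠ C ∧ B ≠ C ∧ ρ A = ρ B ∧ ρ C - ρ A ≠ bad := by
    by_cases hbig : ∃ κ : ZMod 2 × ZMod 2, 2 < (F.filter (fun P => ρ P = κ)).card
    · obtain ⟨κ, hκ⟩ := hbig
      obtain ⟨A, hA, B, hB, C, hC, hAB, hAC, hBC⟩ := Finset.two_lt_card.mp hκ
      simp only [Finset.mem_filter] at hA hB hC
      refine ⟨A, B, C, (hfin.mem_toFinset).mp hA.1, (hfin.mem_toFinset).mp hB.1,
        (hfin.mem_toFinset).mp hC.1, hAB, hAC, hBC, hA.2.trans hB.2.symm, ?_⟩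
      rw [hC.2, hA.2, sub_self]
      exact fun h => hbad0 h.symm
    · push_neg at hbig
      obtain ⟨A, hA, B, hB, hABne, hABeq⟩ :=
        Finset.exists_ne_map_eq_of_card_lt_of_maps_to
          (s := F) (t := (Finset.univ : Finset (ZMod 2 × ZMod 2))) (f := ρ)
          (by
            have : (Finset.univ : Finset (ZMod 2 × ZMod 2)).card = 4 := by decide
            omega)
          (fun a _ => Finset.mem_univ _)
      set G := F.filter (fun P => ρ P = ρ A ∨ ρ P = ρ A + bad) with hG
      have hGcard : G.card ≤ 4 := by
        have h1 : G ⊆ F.filter (fun P => ρ P = ρ A) ∪ F.filter (fun P => ρ P = ρ A + bad) := by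
          intro P hP
          rw [hG] at hP
          simp only [Finset.mem_filter] at hP
          simp only [Finset.mem_union, Finset.mem_filter]
          tauto
        calc G.card ≤ _ := Finset.card_le_card h1
        _ ≤ (F.filter (fun P => ρ P = ρ A)).card + (F.filter (fun P => ρ P = ρ A + bad)).card :=
          Finset.card_union_le _ _
        _ ≤ 4 := by
          have := hbig (ρ A); have := hbig (ρ A + bad); omega
      have hnotsub : ¬ F ⊆ G := fun hsub => by
        have := Finset.card_le_card hsub; omega
      obtain ⟨C, hCF, hCG⟩ := Finset.not_subset.mp hnotsub
      simp only [hG, Finset.mem_filter, not_and, not_or] at hCG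
      obtain ⟨hC1, hC2⟩ := hCG hCF
      refine ⟨A, B, C, (hfin.mem_toFinset).mp hA, (hfin.mem_toFinset).mp hB,
        (hfin.mem_toFinset).mp hCF, hABne, ?_, ?_, hABeq, ?_⟩
      · exact fun h => hC1 (h ▸ rfl)
      · exact fun h => hC1 (by rw [← h, ← hABeq])
      · intro h
        exact hC2 (by rw [← h]; ring)
  obtain ⟨A, B, C, hAX, hBX, hCX, hAB, hAC, hBC, hABr, hCr⟩ := claim
  obtain ⟨L, hL, hAL, hBL, hCL⟩ := collinear_of_red m n hm2 hn2 hcop A B C hABr hCr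
  rcases hX L hL A hAX B hBX C hCX hAL hBL hCL with h | h | h
  · exact hAB h
  · exact hAC h
  · exact hBC h

lemma lower_bound (m n : ℕ) (hm1 : 1 < m) (hn1 : 1 < n) (hm2 : 2 ∣ m) (hn2 : 2 ∣ n) :
    ∃ X : Set (ZMod m × ZMod n), NoThreeInLine m n X ∧ X.ncard = 4 := by
  haveI : NeZero m := ⟨by omega⟩
  haveI : NeZero n := ⟨by omega⟩
  set ρ := torusRed m n 2 hm2 hn2 with hρ
  set p1 : ZMod m × ZMod n := (0, 0) with hp1
  set p2 : ZMod m × ZMod n := (1, 0) with hp2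
  set p3 : ZMod m × ZMod n := (0, 1) with hp3
  set p4 : ZMod m × ZMod n := (1, 1) with hp4
  set X : Set (ZMod m × ZMod n) := {p1, p2, p3, p4} with hXdef
  have v1 : ρ p1 = (0, 0) := Prod.ext (map_zero _) (map_zero _)
  have v2 : ρ p2 = (1, 0) := Prod.ext (map_one _) (map_zero _)
  have v3 : ρ p3 = (0, 1) := Prod.ext (map_zero _) (map_one _)
  have v4 : ρ p4 = (1, 1) := Prod.ext (map_one _) (map_one _)
  have hinj : ∀ P ∈ X, ∀ Q ∈ X, ρ P = ρ Q → P = Q := by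
    intro P hP Q hQ h
    rw [hXdef] at hP hQ
    simp only [Set.mem_insert_iff, Set.mem_singleton_iff] at hP hQ
    rcases hP with rfl | rfl | rfl | rfl <;> rcases hQ with rfl | rfl | rfl | rfl <;>
      simp only [v1, v2, v3, v4] at h <;>
      first
        | rfl
        | exact absurd h (by decide)
  have hne : ∀ P ∈ X, ∀ Q ∈ X, ρ P ≠ ρ Q → P ≠ Q := by
    intro P hP Q hQ h hPQ
    exact h (hPQ ▸ rfl)
  have hNTL : NoThreeInLine m n X := by
    intro L hL A hA B hB C hC hAL hBL hCL
    obtain ⟨a, b, u, v, hcop, rfl⟩ := hL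
    obtain ⟨PA, ⟨k1, hk1⟩, hPA⟩ := hAL
    obtain ⟨PB, ⟨k2, hk2⟩, hPB⟩ := hBL
    obtain ⟨PC, ⟨k3, hk3⟩, hPC⟩ := hCL
    have redπ : ∀ s t : ℤ, ρ (torusProj m n (s, t)) = ((s : ZMod 2), (t : ZMod 2)) := by
      intro s t
      refine Prod.ext ?_ ?_
      · show (ZMod.castHom hm2 (ZMod 2)) ((s : ZMod m)) = (s : ZMod 2)
        exact map_intCast _ s
      · show (ZMod.castHom hn2 (ZMod 2)) ((t : ZMod n)) = (t : ZMod 2)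
        exact map_intCast _ t
    have hρA : ρ A = (((a + u * k1 : ℤ) : ZMod 2), ((b + v * k1 : ℤ) : ZMod 2)) := by
      rw [← hPA, hk1]; exact redπ _ _
    have hρB : ρ B = (((a + u * k2 : ℤ) : ZMod 2), ((b + v * k2 : ℤ) : ZMod 2)) := by
      rw [← hPB, hk2]; exact redπ _ _
    have hρC : ρ C = (((a + u * k3 : ℤ) : ZMod 2), ((b + v * k3 : ℤ) : ZMod 2)) := by
      rw [← hPC, hk3]; exact redπ _ _
    have key : ∀ s t : ℤ, (s : ZMod 2) = (t : ZMod 2) →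
        (((a + u * s : ℤ) : ZMod 2), ((b + v * s : ℤ) : ZMod 2)) =
          (((a + u * t : ℤ) : ZMod 2), ((b + v * t : ℤ) : ZMod 2)) := by
      intro s t hst
      refine Prod.ext ?_ ?_ <;> push_cast <;> rw [hst]
    have tri : ∀ x y z : ZMod 2, x = y ∨ x = z ∨ y = z := by decide
    rcases tri (k1 : ZMod 2) (k2 : ZMod 2) (k3 : ZMod 2) with h | h | h
    · exact Or.inl (hinj A hA B hB (by rw [hρA, hρB]; exact key k1 k2 h))
    · exact Or.inr (Or.inl (hinj A hA C hC (by rw [hρA, hρC]; exact key k1 k3 h)))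
    · exact Or.inr (Or.inr (hinj B hB C hC (by rw [hρB, hρC]; exact key k2 k3 h)))
  have d12 : p1 ≠ p2 := fun h => by
    have := congrArg ρ h; rw [v1, v2] at this; exact absurd this (by decide)
  have d13 : p1 ≠ p3 := fun h => by
    have := congrArg ρ h; rw [v1, v3] at this; exact absurd this (by decide)
  have d14 : p1 ≠ p4 := fun h => by
    have := congrArg ρ h; rw [v1, v4] at this; exact absurd this (by decide)
  have d23 : p2 ≠ p3 := fun h => by
    have := congrArg ρ h; rw [v2, v3] at this; exact absurd this (by decide)
  have d24 : p2 ≠ p4 := fun h => by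
    have := congrArg ρ h; rw [v2, v4] at this; exact absurd this (by decide)
  have d34 : p3 ≠ p4 := fun h => by
    have := congrArg ρ h; rw [v3, v4] at this; exact absurd this (by decide)
  refine ⟨X, hNTL, ?_⟩
  rw [hXdef]
  rw [Set.ncard_insert_of_notMem (by
      simp only [Set.mem_insert_iff, Set.mem_singleton_iff]
      push_neg
      exact ⟨d12, d13, d14⟩) (Set.toFinite _),
    Set.ncard_insert_of_notMem (by
      simp only [Set.mem_insert_iff, Set.mem_singleton_iff]
      push_neg
      exact ⟨d23, d24⟩) (Set.toFinite _),
    Set.ncard_pair d34]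

theorem tau_eq_four_of_gcd_eq_two' (m n : ℕ) (hm : 1 < m) (hn : 1 < n)
    (h : Nat.gcd m n = 2) : tau m n = 4 := by
  have hm2 : 2 ∣ m := h ▸ Nat.gcd_dvd_left m n
  have hn2 : 2 ∣ n := h ▸ Nat.gcd_dvd_right m n
  obtain ⟨X₀, hX₀, hX₀card⟩ := lower_bound m n hm hn hm2 hn2
  have h4mem : 4 ∈ {k : ℕ | ∃ X : Set (ZMod m × ZMod n), NoThreeInLine m n X ∧ X.ncard = k} :=
    ⟨X₀, hX₀, hX₀card⟩
  have hub : ∀ k ∈ {k : ℕ | ∃ X : Set (ZMod m × ZMod n), NoThreeInLine m n X ∧ X.ncard = k},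
      k ≤ 4 := by
    rintro k ⟨X, hX, rfl⟩
    exact ncard_le_four m n hm hn h X hX
  rw [tau]
  exact le_antisymm (csSup_le ⟨4, h4mem⟩ hub) (le_csSup ⟨4, hub⟩ h4mem)


/-- Theorem 1.2(2): if gcd(m,n) = 2 then τ(T_{m×n}) = 4. -/
theorem tau_eq_four_of_gcd_eq_two (m n : ℕ) (hm : 1 < m) (hn : 1 < n)
    (h : Nat.gcd m n = 2) : tau m n = 4 := by
  exact tau_eq_four_of_gcd_eq_two' m n hm hn h
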